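/- In a tree (connected acyclic graph) with a nonempty set I of marked (infected) nodes, there exist at most two vertices achieving the minimum infection eccentricity, where the infection eccentricity of a vertex v is the maximum distance from v to a vertex in I. -/
import Mathlib

open SimpleGraph

section Aux

variable {V : Type*} [DecidableEq V] {G : SimpleGraph V}

/-- In a tree, every path realizes the distance between its endpoints. -/
lemma tree_path_length (hG : G.IsTree) {u v : V} (p : G.Walk u v) (hp : p.IsPath) :
    p.length = G.dist u v := by
  obtain ⟨q, hq, hql⟩ := hG.isConnected.exists_path_of_dist u v
  obtain ⟨r, -, hun⟩ := hG.existsUnique_path u v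
  rw [hun p hp, ← hun q hq, hql]

/-- In a tree, adjacent vertices have distinct distances to any vertex. -/
lemma adj_dist_ne (hG : G.IsTree) {a b : V} (h : G.Adj a b) (u : V) :
    G.dist u a ≠ G.dist u b := by
  intro heq
  obtain ⟨p, hp, hpl⟩ := hG.isConnected.exists_path_of_dist u a
  by_cases hb : b ∈ p.support
  · have h1 : G.dist u b ≤ (p.takeUntil b hb).length := SimpleGraph.dist_le _
    have h2 : G.dist b a ≤ (p.dropUntil b hb).length := SimpleGraph.dist_le _
    have h3 : (p.takeUntil b hb).length + (p.dropUntil b hb).length = p.length := by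
      have := congr_arg SimpleGraph.Walk.length (p.take_spec hb)
      rwa [SimpleGraph.Walk.length_append] at this
    have h4 : G.dist b a = 1 := SimpleGraph.dist_eq_one_iff_adj.2 h.symm
    omega
  · have hb' : b ∉ p.reverse.support := by rwa [SimpleGraph.Walk.support_reverse, List.mem_reverse]
    have hq : (SimpleGraph.Walk.cons h.symm p.reverse).IsPath := hp.reverse.cons hb'
    have hql : (SimpleGraph.Walk.cons h.symm p.reverse).length = p.length + 1 := by
      simp [SimpleGraph.Walk.length_cons]
    have htp := tree_path_length hG _ hq
    have hco : G.dist b u = G.dist u b := SimpleGraph.dist_comm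
    omega

/-- Adjacent vertices: distances to `u` differ by exactly one (tree). -/
lemma adj_dist_step (hG : G.IsTree) {a b : V} (h : G.Adj a b) (u : V) :
    G.dist u b = G.dist u a + 1 ∨ G.dist u a = G.dist u b + 1 := by
  have h1 : G.dist u b ≤ G.dist u a + 1 := by
    have := hG.isConnected.dist_triangle (u := u) (v := a) (w := b)
    rwa [SimpleGraph.dist_eq_one_iff_adj.2 h] at this
  have h2 : G.dist u a ≤ G.dist u b + 1 := by
    have := hG.isConnected.dist_triangle (u := u) (v := b) (w := a)
    rwa [SimpleGraph.dist_eq_one_iff_adj.2 h.symm] at this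
  have h3 := adj_dist_ne hG h u
  omega

/-- In a tree, a vertex cannot have two distinct neighbors both strictly closer to `u`. -/
lemma no_two_closer (hG : G.IsTree) {z u v w : V} (hzv : G.Adj z v) (hzw : G.Adj z w)
    (hvw : v ≠ w) (hv : G.dist v u + 1 = G.dist z u) (hw : G.dist w u + 1 = G.dist z u) :
    False := by
  obtain ⟨pv, hpv, hpvl⟩ := hG.isConnected.exists_path_of_dist v u
  obtain ⟨pw, hpw, hpwl⟩ := hG.isConnected.exists_path_of_dist w u
  have h1 : (SimpleGraph.Walk.cons hzv pv).length = G.dist z u := by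
    simp [SimpleGraph.Walk.length_cons, hpvl, ← hv]
  have h2 : (SimpleGraph.Walk.cons hzw pw).length = G.dist z u := by
    simp [SimpleGraph.Walk.length_cons, hpwl, ← hw]
  have hq1 : (SimpleGraph.Walk.cons hzv pv).IsPath :=
    SimpleGraph.Walk.isPath_of_length_eq_dist _ h1
  have hq2 : (SimpleGraph.Walk.cons hzw pw).IsPath :=
    SimpleGraph.Walk.isPath_of_length_eq_dist _ h2
  obtain ⟨r, -, hun⟩ := hG.existsUnique_path z u
  have heq : (SimpleGraph.Walk.cons hzv pv) = (SimpleGraph.Walk.cons hzw pw) := by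
    rw [hun _ hq1, hun _ hq2]
  have := congr_arg (fun q : G.Walk z u => q.getVert 1) heq
  simp only [SimpleGraph.Walk.getVert_cons_succ, SimpleGraph.Walk.getVert_zero] at this
  exact hvw this

/-- Distances from the endpoints to vertices of a geodesic walk. -/
lemma getVert_dist (hconn : G.Connected) {x y : V} (p : G.Walk x y)
    (hl : p.length = G.dist x y) :
    ∀ i ≤ p.length, G.dist x (p.getVert i) = i ∧ G.dist (p.getVert i) y = p.length - i := by
  have ha : ∀ i ≤ p.length, G.dist x (p.getVert i) ≤ i := by
    intro i hi
    induction i with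
    | zero => simp [SimpleGraph.Walk.getVert_zero]
    | succ n ih =>
      have hadj : G.Adj (p.getVert n) (p.getVert (n + 1)) :=
        p.adj_getVert_succ (by omega)
      have h1 : G.dist x (p.getVert (n+1)) ≤
          G.dist x (p.getVert n) + G.dist (p.getVert n) (p.getVert (n+1)) :=
        hconn.dist_triangle
      have h2 : G.dist (p.getVert n) (p.getVert (n+1)) = 1 :=
        SimpleGraph.dist_eq_one_iff_adj.2 hadj
      have h3 := ih (by omega)
      omega
  have hb : ∀ t, ∀ i ≤ p.length, p.length - i = t → G.dist (p.getVert i) y ≤ t := by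
    intro t
    induction t with
    | zero =>
      intro i hi ht
      have : i = p.length := by omega
      subst this
      simp [SimpleGraph.Walk.getVert_length]
    | succ n ih =>
      intro i hi ht
      have hadj : G.Adj (p.getVert i) (p.getVert (i + 1)) :=
        p.adj_getVert_succ (by omega)
      have h1 : G.dist (p.getVert i) y ≤
          G.dist (p.getVert i) (p.getVert (i+1)) + G.dist (p.getVert (i+1)) y :=
        hconn.dist_triangle
      have h2 : G.dist (p.getVert i) (p.getVert (i+1)) = 1 :=
        SimpleGraph.dist_eq_one_iff_adj.2 hadj
      have h3 := ih (i+1) (by omega) (by omega)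
      omega
  intro i hi
  have h1 := ha i hi
  have h2 := hb (p.length - i) i hi rfl
  have h3 : G.dist x y ≤ G.dist x (p.getVert i) + G.dist (p.getVert i) y :=
    hconn.dist_triangle
  omega

/-- Sequence lemma: a ±1-step sequence where an up-step propagates rightwards has
all interior values strictly below the max of its endpoints. -/
lemma seq_lt {a : ℕ → ℕ} {k j : ℕ}
    (hstep : ∀ i < k, a (i+1) = a i + 1 ∨ a i = a (i+1) + 1)
    (hup : ∀ i, 0 < i → i < k → a i = a (i-1) + 1 → a (i+1) = a i + 1)
    (hj0 : 0 < j) (hjk : j < k) : a j < max (a 0) (a k) := by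
  by_cases hcase : a j = a (j-1) + 1
  · -- up-step into j; propagate up to k
    have hprop : ∀ d, j + d ≤ k → a (j + d) = a j + d ∧ a (j + d) = a (j + d - 1) + 1 := by
      intro d
      induction d with
      | zero => exact fun _ => ⟨by simp, by simpa using hcase⟩
      | succ n ih =>
        intro hd
        obtain ⟨h1, h2⟩ := ih (by omega)
        have h3 := hup (j + n) (by omega) (by omega) h2
        simp only [show j + (n+1) = j + n + 1 from rfl, Nat.add_sub_cancel]
        exact ⟨by omega, by omega⟩
    have h4 := (hprop (k - j) (by omega)).1
    have h5 : a k = a j + (k - j) := by rwa [Nat.add_sub_cancel' (le_of_lt hjk)] at h4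
    have : a j < a k := by omega
    omega
  · -- down-step into j; all earlier steps are down
    have hdown : ∀ d, d ≤ j → a (j - d) = a j + d ∧ (d = 0 ∨ a (j - d) = a (j - d + 1) + 1) := by
      intro d
      induction d with
      | zero => exact fun _ => ⟨by simp, Or.inl rfl⟩
      | succ n ih =>
        intro hd
        obtain ⟨h1, h2⟩ := ih (by omega)
        have e2 : j - n - 1 + 1 = j - n := by omega
        have hstepn := hstep (j - n - 1) (by omega)
        rw [e2] at hstepn
        have e3 : j - (n + 1) = j - n - 1 := by omega
        rcases hstepn with hu | hd'
        · exfalso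
          rcases Nat.eq_zero_or_pos n with hn | hn
          · subst hn
            simp only [Nat.sub_zero] at hu
            exact hcase hu
          · have hupn := hup (j - n) (by omega) (by omega)
              (by rw [show j - n - 1 = j - n - 1 from rfl] at hu; exact hu)
            rcases h2 with h2 | h2
            · omega
            · omega
        · refine ⟨?_, Or.inr ?_⟩
          · rw [e3]; omega
          · rw [e3, e2]; omega
    have h4 := (hdown j le_rfl).1
    simp only [Nat.sub_self] at h4
    have : a j < a 0 := by omega
    omega

end Aux

/-- In a finite tree with a nonempty set `I` of infected nodes, at most two vertices
achieve the minimum infection eccentricity `ẽ(v) = max_{u ∈ I} d(v,u)`. -/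
theorem stmt_0 {V : Type*} [Fintype V] [DecidableEq V] [Nonempty V]
    (G : SimpleGraph V) (hG : G.IsTree)
    (I : Finset V) (hI : I.Nonempty)
    (e : V → ℕ) (he : ∀ v, e v = I.sup' hI (fun u => G.dist v u)) :
    (Finset.univ.filter
      (fun v => e v = Finset.univ.inf' Finset.univ_nonempty e)).card ≤ 2 := by
  set m := Finset.univ.inf' Finset.univ_nonempty e with hm
  set S := Finset.univ.filter (fun v => e v = m) with hS
  -- every element of S has eccentricity m
  have hmem : ∀ v ∈ S, e v = m := by
    intro v hv
    simpa [hS] using (Finset.mem_filter.1 hv).2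
  -- key: any two distinct minimizers are adjacent
  have key : ∀ x ∈ S, ∀ y ∈ S, x ≠ y → G.Adj x y := by
    intro x hx y hy hxy
    have hk0 : 0 < G.dist x y := hG.isConnected.pos_dist_of_ne hxy
    by_cases hk1 : G.dist x y = 1
    · exact SimpleGraph.dist_eq_one_iff_adj.1 hk1
    exfalso
    have hk2 : 2 ≤ G.dist x y := by omega
    obtain ⟨p, hp, hpl⟩ := hG.isConnected.exists_path_of_dist x y
    set k := G.dist x y with hk
    set z := p.getVert 1 with hz
    -- m ≤ e z
    have hml : m ≤ e z := Finset.inf'_le e (Finset.mem_univ z)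
    -- but e z < m
    have hlt : e z < m := by
      rw [he z]
      rw [Finset.sup'_lt_iff]
      · intro u hu
        -- the distance sequence along the geodesic
        set a : ℕ → ℕ := fun i => G.dist (p.getVert i) u with ha
        have hstep : ∀ i < k, a (i+1) = a i + 1 ∨ a i = a (i+1) + 1 := by
          intro i hi
          have hadj : G.Adj (p.getVert i) (p.getVert (i+1)) :=
            p.adj_getVert_succ (by omega)
          have hst := adj_dist_step hG hadj u
          have c1 : G.dist (p.getVert i) u = G.dist u (p.getVert i) := SimpleGraph.dist_comm
          have c2 : G.dist (p.getVert (i+1)) u = G.dist u (p.getVert (i+1)) :=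
            SimpleGraph.dist_comm
          simp only [ha]
          omega
        have hup : ∀ i, 0 < i → i < k → a i = a (i-1) + 1 → a (i+1) = a i + 1 := by
          intro i hi0 hik hprev
          rcases hstep i hik with h | h
          · exact h
          exfalso
          -- both neighbors strictly closer: impossible
          have hne : p.getVert (i-1) ≠ p.getVert (i+1) := by
            intro heq
            have h1 := (getVert_dist hG.isConnected p hpl (i-1) (by omega)).1
            have h2 := (getVert_dist hG.isConnected p hpl (i+1) (by omega)).1
            rw [heq] at h1
            omega
          have hadj1 : G.Adj (p.getVert i) (p.getVert (i-1)) := by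
            have := p.adj_getVert_succ (i := i - 1) (by omega)
            have hidx : i - 1 + 1 = i := by omega
            rw [hidx] at this
            exact this.symm
          have hadj2 : G.Adj (p.getVert i) (p.getVert (i+1)) :=
            p.adj_getVert_succ (by omega)
          exact no_two_closer hG (u := u) hadj1 hadj2 hne (by simp only [ha] at hprev ⊢; omega)
            (by simp only [ha] at h ⊢; omega)
        have hseq := seq_lt hstep hup (j := 1) one_pos (by omega)
        have ha0 : a 0 = G.dist x u := by
          simp [ha, SimpleGraph.Walk.getVert_zero]
        have hak : a k = G.dist y u := by
          simp only [ha]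
          rw [← hpl, SimpleGraph.Walk.getVert_length]
        have hax : G.dist x u ≤ m := by
          have := Finset.le_sup' (fun u => G.dist x u) hu
          rw [← he x, hmem x hx] at this
          exact this
        have hay : G.dist y u ≤ m := by
          have := Finset.le_sup' (fun u => G.dist y u) hu
          rw [← he y, hmem y hy] at this
          exact this
        calc G.dist z u = a 1 := rfl
          _ < max (a 0) (a k) := hseq
          _ ≤ m := by rw [ha0, hak]; omega
    omega
  -- a tree has no triangle: conclude |S| ≤ 2
  by_contra hcard
  push_neg at hcard
  obtain ⟨x, hx, y, hy, z, hz, hxy, hxz, hyz⟩ := Finset.two_lt_card.1 hcard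
  have axy := key x hx y hy hxy
  have ayz := key y hy z hz hyz
  have axz := key x hx z hz hxz
  -- two distinct paths from x to z
  have hp1 : (SimpleGraph.Walk.cons axz SimpleGraph.Walk.nil).IsPath := by
    simp [SimpleGraph.Walk.cons_isPath_iff, hxz]
  have hp2 : (SimpleGraph.Walk.cons axy (SimpleGraph.Walk.cons ayz SimpleGraph.Walk.nil)).IsPath := by
    simp [SimpleGraph.Walk.cons_isPath_iff, hxy, hxz, hyz]
  obtain ⟨r, -, hun⟩ := hG.existsUnique_path x z
  have heq := (hun _ hp1).trans (hun _ hp2).symm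
  have := congr_arg SimpleGraph.Walk.length heq
  simp [SimpleGraph.Walk.length_cons] at this
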